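/- In the abstract framework: for u adapted, square-integrable, with π_τ u = 0, and L = d(W^u ν)/dν, the map W^u is ν-a.s. left-invertible if and only if E_ν[L log L | F_τ] = (1/2) E_ν[|u|_H² | F_τ] ν-a.s. -/

import Mathlib

open MeasureTheory

/-- Conditional entropic criterion of invertibility: for a square-integrable
adapted shift `u` with `π_τ u = 0` and `L = d(W^u ν)/dν`, the map `W^u` is
ν-a.s. left-invertible iff `E_ν[L log L|F_τ] = (1/2) E_ν[|u|²_H|F_τ]` ν-a.s.
The stochastic-analysis ingredients (unconditional entropy criterion, the
identity `L∘W^u · ρ(-δ_β u) = 1` under invertibility, and nullity of the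
conditional expectation of the stochastic integral) are given as hypotheses. -/
theorem conditional_entropic_invertibility_criterion {Ω : Type*}
    {m : MeasurableSpace Ω} {d : ℕ}
    (ℱ : Filtration ℝ m) (ν : Measure Ω) [IsProbabilityMeasure ν]
    {τ : Ω → ℝ} (hτ : IsStoppingTime ℱ (fun w => (τ w : WithTop ℝ)))
    (Wu : Ω → Ω) (hWu : Measurable Wu)
    (hac : Measure.map Wu ν ≪ ν) (hac' : ν ≪ Measure.map Wu ν)
    (L : Ω → ℝ) (hL : ∀ᵐ w ∂ν, L w = ((Measure.map Wu ν).rnDeriv ν w).toReal)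
    (u' : ℝ → Ω → EuclideanSpace ℝ (Fin d)) (hu'ad : Adapted ℱ u')
    (hπτ : ∀ᵐ w ∂ν, ∀ᵐ s ∂(volume : Measure ℝ), s ≤ τ w → u' s w = 0)
    (nu2 : Ω → ℝ) (hnu2 : ∀ w, nu2 w = ∫ s in (0:ℝ)..1, ‖u' s w‖^2)
    (hnu2int : Integrable nu2 ν)
    (I : Ω → ℝ)  -- δ_β u
    (hIcond : ν[I|hτ.measurableSpace] =ᵐ[ν] fun _ => 0)
    -- (a) unconditional entropy criterion
    (hcrit : (∃ V : Ω → Ω, Measurable V ∧ (fun w => V (Wu w)) =ᵐ[ν] fun w => w)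
      ↔ ∫ w, L w * Real.log (L w) ∂ν = (1/2) * ∫ w, nu2 w ∂ν)
    -- (b) if left-invertible, L∘W^u · ρ(-δ_β u) = 1 a.s.
    (hid : (∃ V : Ω → Ω, Measurable V ∧ (fun w => V (Wu w)) =ᵐ[ν] fun w => w) →
      (fun w => L (Wu w) * Real.exp (- I w - (1/2) * nu2 w)) =ᵐ[ν] fun _ => 1)
    -- (c) conditional entropy inequality
    (hineq : ∀ᵐ w ∂ν, (ν[fun w => L w * Real.log (L w)|hτ.measurableSpace]) w
      ≤ (1/2) * (ν[nu2|hτ.measurableSpace]) w) :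
    (∃ V : Ω → Ω, Measurable V ∧ (fun w => V (Wu w)) =ᵐ[ν] fun w => w)
      ↔ (ν[fun w => L w * Real.log (L w)|hτ.measurableSpace]
          =ᵐ[ν] fun w => (1/2) * (ν[nu2|hτ.measurableSpace]) w) := by
  have hm : hτ.measurableSpace ≤ m := hτ.measurableSpace_le
  haveI : SigmaFinite (ν.trim hm) := inferInstance
  have hnu2nn : 0 ≤ nu2 := by
    intro w
    rw [hnu2 w]
    exact intervalIntegral.integral_nonneg (by norm_num) (fun s _ => by positivity)
  set f : Ω → ℝ := fun w => L w * Real.log (L w) with hf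
  constructor
  · intro h
    have hint : ∫ w, f w ∂ν = (1/2) * ∫ w, nu2 w ∂ν := hcrit.mp h
    by_cases hLi : Integrable f ν
    · refine (integral_eq_iff_of_ae_le integrable_condExp
        (integrable_condExp.const_mul _) hineq).mp ?_
      rw [integral_condExp hm (f := f), integral_const_mul, integral_condExp hm (f := nu2), hint]
    · have h0 : ν[f|hτ.measurableSpace] = 0 := condExp_of_not_integrable hLi
      have hI0 : ∫ w, f w ∂ν = 0 := integral_undef hLi
      have hn0 : ∫ w, nu2 w ∂ν = 0 := by linarith [hint.symm.trans hI0]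
      have hnu2z : nu2 =ᵐ[ν] 0 :=
        (integral_eq_zero_iff_of_nonneg hnu2nn hnu2int).mp hn0
      have hce : ν[nu2|hτ.measurableSpace] =ᵐ[ν] 0 := by
        calc ν[nu2|hτ.measurableSpace] =ᵐ[ν] ν[(0 : Ω → ℝ)|hτ.measurableSpace] :=
              condExp_congr_ae hnu2z
          _ = 0 := condExp_zero
      rw [h0]
      filter_upwards [hce] with w hw
      simp [hw]
  · intro h
    refine hcrit.mpr ?_
    by_cases hLi : Integrable f ν
    · calc ∫ w, f w ∂ν = ∫ w, (ν[f|hτ.measurableSpace]) w ∂ν :=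
            (integral_condExp hm (f := f)).symm
        _ = ∫ w, (1/2) * (ν[nu2|hτ.measurableSpace]) w ∂ν := integral_congr_ae h
        _ = (1/2) * ∫ w, nu2 w ∂ν := by
            rw [integral_const_mul, integral_condExp hm (f := nu2)]
    · have h0 : ν[f|hτ.measurableSpace] = 0 := condExp_of_not_integrable hLi
      rw [h0] at h
      have hce : ν[nu2|hτ.measurableSpace] =ᵐ[ν] 0 := by
        filter_upwards [h.symm] with w hw
        have : (1/2 : ℝ) * (ν[nu2|hτ.measurableSpace]) w = 0 := hw
        linarith
      have hn0 : ∫ w, nu2 w ∂ν = 0 := by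
        rw [← integral_condExp hm (f := nu2), integral_congr_ae hce]
        simp
      rw [integral_undef hLi, hn0]
      ring
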